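/- Let n ≥ 5 and let A be the n×n clamped-clamped beam matrix. Then A is symmetric positive definite: A = Aᵗ and xᵗ A x > 0 for every nonzero x ∈ ℝⁿ. -/
import Mathlib


open scoped ENNReal
open Matrix

/-- The `n × n` clamped-clamped beam matrix (1-based index `i' = i+1`). -/
def A_CC (n : ℕ) : Matrix (Fin n) (Fin n) ℝ :=
  Matrix.of fun i j =>
    let i' := (i : ℕ) + 1
    let j' := (j : ℕ) + 1
    if i' = j' then (if i' = 1 ∨ i' = n then 7 else 6)
    else if j' = i' + 1 ∨ i' = j' + 1 then -4
    else if j' = i' + 2 ∨ i' = j' + 2 then 1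
    else 0

open Finset

noncomputable def uu (n : ℕ) (x : Fin n → ℝ) (k : ℕ) : ℝ :=
  if h : 1 ≤ k ∧ k ≤ n then x ⟨k - 1, by omega⟩ else 0

lemma uu_zero (n : ℕ) (x : Fin n → ℝ) (k : ℕ) (h : ¬ (1 ≤ k ∧ k ≤ n)) : uu n x k = 0 := by
  simp only [uu, dif_neg h]

lemma uu_val (n : ℕ) (x : Fin n → ℝ) (a : ℕ) (ha : a < n) : uu n x (a + 1) = x ⟨a, ha⟩ := by
  rw [uu, dif_pos (by omega : 1 ≤ a + 1 ∧ a + 1 ≤ n)]; rfl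

lemma pick (n : ℕ) (g : ℕ → ℝ) (m : ℕ) (hg : n ≤ m → g m = 0) :
    (∑ j ∈ range n, if j = m then g j else 0) = g m := by
  rw [Finset.sum_ite_eq' (range n) m g]
  split_ifs with h
  · rfl
  · exact (hg (by simpa using h)).symm

set_option maxHeartbeats 2000000 in
lemma summand (n : ℕ) (x : Fin n → ℝ) (a b : ℕ) (ha : a < n) (hb : b < n) :
    uu n x (a+1) * (A_CC n ⟨a, ha⟩ ⟨b, hb⟩ * uu n x (b+1)) =
      (if b = a then (if a + 1 = 1 ∨ a + 1 = n then 7 else 6) * (uu n x (a+1) * uu n x (a+1)) else 0)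
    + (if b = a+1 then (-4) * (uu n x (a+1) * uu n x (b+1)) else 0)
    + (if a = b+1 then (-4) * (uu n x (a+1) * uu n x (b+1)) else 0)
    + (if b = a+2 then (uu n x (a+1) * uu n x (b+1)) else 0)
    + (if a = b+2 then (uu n x (a+1) * uu n x (b+1)) else 0) := by
  simp only [A_CC, of_apply]
  split_ifs <;> first | (exfalso; omega) | (subst_vars; ring)

lemma shift (n : ℕ) (f : ℕ → ℝ) :
    ∑ m ∈ range n, f (m+1) = ∑ m ∈ range n, f m - f 0 + f n := by
  have h1 := Finset.sum_range_succ f n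
  have h2 := Finset.sum_range_succ' f n
  linarith

-- Step A+B: quadratic form as single sum
lemma quad_single (n : ℕ) (x : Fin n → ℝ) :
    x ⬝ᵥ (A_CC n).mulVec x =
      ∑ a ∈ range n,
        ((if a + 1 = 1 ∨ a + 1 = n then (7:ℝ) else 6) * (uu n x (a+1) * uu n x (a+1))
          - 8 * (uu n x (a+1) * uu n x (a+2)) + 2 * (uu n x (a+1) * uu n x (a+3))) := by
  set u := uu n x with hu
  have step1 : x ⬝ᵥ (A_CC n).mulVec x = ∑ i : Fin n, ∑ j : Fin n,
      u (↑i+1) * (A_CC n i j * u (↑j+1)) := by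
    simp only [dotProduct, mulVec, Finset.mul_sum]
    refine Finset.sum_congr rfl fun i _ => Finset.sum_congr rfl fun j _ => ?_
    rw [hu, uu_val n x ↑i i.isLt, uu_val n x ↑j j.isLt]
  rw [step1]
  have step2 : ∀ i j : Fin n, u (↑i+1) * (A_CC n i j * u (↑j+1)) =
      (if (↑j:ℕ) = ↑i then (if (↑i:ℕ) + 1 = 1 ∨ (↑i:ℕ) + 1 = n then 7 else 6) * (u (↑i+1) * u (↑i+1)) else 0)
    + (if (↑j:ℕ) = ↑i+1 then (-4) * (u (↑i+1) * u (↑j+1)) else 0)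
    + (if (↑i:ℕ) = ↑j+1 then (-4) * (u (↑i+1) * u (↑j+1)) else 0)
    + (if (↑j:ℕ) = ↑i+2 then (u (↑i+1) * u (↑j+1)) else 0)
    + (if (↑i:ℕ) = ↑j+2 then (u (↑i+1) * u (↑j+1)) else 0) := by
    intro i j
    have := summand n x ↑i ↑j i.isLt j.isLt
    simpa using this
  calc ∑ i : Fin n, ∑ j : Fin n, u (↑i+1) * (A_CC n i j * u (↑j+1))
      = ∑ a ∈ range n, ∑ b ∈ range n,
        ((if b = a then (if a + 1 = 1 ∨ a + 1 = n then (7:ℝ) else 6) * (u (a+1) * u (a+1)) else 0)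
        + (if b = a+1 then (-4) * (u (a+1) * u (b+1)) else 0)
        + (if a = b+1 then (-4) * (u (a+1) * u (b+1)) else 0)
        + (if b = a+2 then (u (a+1) * u (b+1)) else 0)
        + (if a = b+2 then (u (a+1) * u (b+1)) else 0)) := by
        rw [← Fin.sum_univ_eq_sum_range (fun a => ∑ b ∈ range n,
          ((if b = a then (if a + 1 = 1 ∨ a + 1 = n then (7:ℝ) else 6) * (u (a+1) * u (a+1)) else 0)
          + (if b = a+1 then (-4) * (u (a+1) * u (b+1)) else 0)
          + (if a = b+1 then (-4) * (u (a+1) * u (b+1)) else 0)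
          + (if b = a+2 then (u (a+1) * u (b+1)) else 0)
          + (if a = b+2 then (u (a+1) * u (b+1)) else 0))) n]
        refine Finset.sum_congr rfl fun i _ => ?_
        rw [← Fin.sum_univ_eq_sum_range (fun b =>
          ((if b = ↑i then (if (↑i:ℕ) + 1 = 1 ∨ (↑i:ℕ) + 1 = n then (7:ℝ) else 6) * (u (↑i+1) * u (↑i+1)) else 0)
          + (if b = ↑i+1 then (-4) * (u (↑i+1) * u (b+1)) else 0)
          + (if (↑i:ℕ) = b+1 then (-4) * (u (↑i+1) * u (b+1)) else 0)
          + (if b = ↑i+2 then (u (↑i+1) * u (b+1)) else 0)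
          + (if (↑i:ℕ) = b+2 then (u (↑i+1) * u (b+1)) else 0))) n]
        exact Finset.sum_congr rfl fun j _ => step2 i j
    _ = ∑ a ∈ range n,
        ((if a + 1 = 1 ∨ a + 1 = n then (7:ℝ) else 6) * (u (a+1) * u (a+1))
          - 8 * (u (a+1) * u (a+2)) + 2 * (u (a+1) * u (a+3))) := by
      simp only [Finset.sum_add_distrib]
      have hT1 : ∑ a ∈ range n, ∑ b ∈ range n,
          (if b = a then (if a + 1 = 1 ∨ a + 1 = n then (7:ℝ) else 6) * (u (a+1) * u (a+1)) else 0)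
          = ∑ a ∈ range n, (if a + 1 = 1 ∨ a + 1 = n then (7:ℝ) else 6) * (u (a+1) * u (a+1)) := by
        refine Finset.sum_congr rfl fun a ha => ?_
        rw [Finset.sum_ite_eq' (range n) a, if_pos ha]
      have hT2 : ∑ a ∈ range n, ∑ b ∈ range n,
          (if b = a+1 then (-4) * (u (a+1) * u (b+1)) else 0)
          = ∑ a ∈ range n, (-4) * (u (a+1) * u (a+2)) := by
        refine Finset.sum_congr rfl fun a _ => ?_
        exact pick n (fun b => (-4) * (u (a+1) * u (b+1))) (a+1)
          (fun h => by have hz := uu_zero n x (a+2) (by omega); simp only [hu, hz]; ring)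
      have hT3 : ∑ a ∈ range n, ∑ b ∈ range n,
          (if a = b+1 then (-4) * (u (a+1) * u (b+1)) else 0)
          = ∑ b ∈ range n, (-4) * (u (b+2) * u (b+1)) := by
        rw [Finset.sum_comm]
        refine Finset.sum_congr rfl fun b _ => ?_
        exact pick n (fun a => (-4) * (u (a+1) * u (b+1))) (b+1)
          (fun h => by have hz := uu_zero n x (b+2) (by omega); simp only [hu, hz]; ring)
      have hT4 : ∑ a ∈ range n, ∑ b ∈ range n,
          (if b = a+2 then (u (a+1) * u (b+1)) else 0)
          = ∑ a ∈ range n, u (a+1) * u (a+3) := by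
        refine Finset.sum_congr rfl fun a _ => ?_
        exact pick n (fun b => u (a+1) * u (b+1)) (a+2)
          (fun h => by have hz := uu_zero n x (a+3) (by omega); simp only [hu, hz]; ring)
      have hT5 : ∑ a ∈ range n, ∑ b ∈ range n,
          (if a = b+2 then (u (a+1) * u (b+1)) else 0)
          = ∑ b ∈ range n, u (b+3) * u (b+1) := by
        rw [Finset.sum_comm]
        refine Finset.sum_congr rfl fun b _ => ?_
        exact pick n (fun a => u (a+1) * u (b+1)) (b+2)
          (fun h => by have hz := uu_zero n x (b+3) (by omega); simp only [hu, hz]; ring)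
      rw [hT1, hT2, hT3, hT4, hT5]
      simp only [← Finset.sum_add_distrib, ← Finset.sum_sub_distrib]
      exact Finset.sum_congr rfl fun a _ => by ring

lemma quad_sq (n : ℕ) (hn : 5 ≤ n) (x : Fin n → ℝ) :
    x ⬝ᵥ (A_CC n).mulVec x =
      (∑ m ∈ range n, (uu n x m - 2 * uu n x (m+1) + uu n x (m+2))^2)
      + 2 * (uu n x 1)^2 + 2 * (uu n x n)^2 := by
  rw [quad_single]
  set u := uu n x with hu
  have u0 : u 0 = 0 := uu_zero n x 0 (by omega)
  have un1 : u (n+1) = 0 := uu_zero n x (n+1) (by omega)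
  have un2 : u (n+2) = 0 := uu_zero n x (n+2) (by omega)
  have hS : ∑ m ∈ range n, u (m+1) * u (m+1)
      = ∑ m ∈ range n, u m * u m - u 0 * u 0 + u n * u n := by
    simpa using shift n (fun m => u m * u m)
  have hS2 : ∑ m ∈ range n, u (m+2) * u (m+2)
      = ∑ m ∈ range n, u (m+1) * u (m+1) - u 1 * u 1 + u (n+1) * u (n+1) := by
    simpa using shift n (fun m => u (m+1) * u (m+1))
  have hC : ∑ m ∈ range n, u (m+1) * u (m+2)
      = ∑ m ∈ range n, u m * u (m+1) - u 0 * u 1 + u n * u (n+1) := by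
    simpa using shift n (fun m => u m * u (m+1))
  have hE : ∑ m ∈ range n, u (m+1) * u (m+3)
      = ∑ m ∈ range n, u m * u (m+2) - u 0 * u 2 + u n * u (n+2) := by
    simpa using shift n (fun m => u m * u (m+2))
  simp only [u0, un1, un2, mul_zero, zero_mul, sub_zero, add_zero] at hS hS2 hC hE
  have hD : ∑ a ∈ range n, (if a+1 = 1 ∨ a+1 = n then (7:ℝ) else 6) * (u (a+1) * u (a+1))
      = 6 * (∑ a ∈ range n, u (a+1) * u (a+1)) + u 1 * u 1 + u n * u n := by
    have point : ∀ a ∈ range n,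
        (if a+1 = 1 ∨ a+1 = n then (7:ℝ) else 6) * (u (a+1) * u (a+1))
        = 6 * (u (a+1) * u (a+1)) + ((if a = 0 then u (a+1) * u (a+1) else 0)
            + (if a = n-1 then u (a+1) * u (a+1) else 0)) := by
      intro a ha
      simp only [Finset.mem_range] at ha
      split_ifs <;> first | (exfalso; omega) | ring
    rw [Finset.sum_congr rfl point]
    simp only [Finset.sum_add_distrib]
    rw [← Finset.mul_sum]
    have hA : (∑ a ∈ range n, if a = 0 then u (a+1) * u (a+1) else 0) = u 1 * u 1 := by
      simpa using pick n (fun a => u (a+1) * u (a+1)) 0 (fun h => absurd h (by omega))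
    have hn1 : n - 1 + 1 = n := by omega
    have hB : (∑ a ∈ range n, if a = n-1 then u (a+1) * u (a+1) else 0) = u n * u n := by
      have := pick n (fun a => u (a+1) * u (a+1)) (n-1) (fun h => absurd h (by omega))
      simpa [hn1] using this
    rw [hA, hB]; ring
  -- expand the squares on the RHS
  have hR : ∑ m ∈ range n, (u m - 2 * u (m+1) + u (m+2))^2
      = ∑ m ∈ range n, u m * u m + 4 * ∑ m ∈ range n, u (m+1) * u (m+1)
        + ∑ m ∈ range n, u (m+2) * u (m+2)
        - 4 * ∑ m ∈ range n, u m * u (m+1)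
        - 4 * ∑ m ∈ range n, u (m+1) * u (m+2)
        + 2 * ∑ m ∈ range n, u m * u (m+2) := by
    have point : ∀ m ∈ range n, (u m - 2 * u (m+1) + u (m+2))^2
        = u m * u m + 4 * (u (m+1) * u (m+1)) + u (m+2) * u (m+2)
          - 4 * (u m * u (m+1)) - 4 * (u (m+1) * u (m+2)) + 2 * (u m * u (m+2)) :=
      fun m _ => by ring
    rw [Finset.sum_congr rfl point]
    simp only [Finset.sum_add_distrib, Finset.sum_sub_distrib, ← Finset.mul_sum]
  -- split the LHS sum
  have hL : ∑ a ∈ range n,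
      ((if a + 1 = 1 ∨ a + 1 = n then (7:ℝ) else 6) * (u (a+1) * u (a+1))
        - 8 * (u (a+1) * u (a+2)) + 2 * (u (a+1) * u (a+3)))
      = (∑ a ∈ range n, (if a+1 = 1 ∨ a+1 = n then (7:ℝ) else 6) * (u (a+1) * u (a+1)))
        - 8 * ∑ a ∈ range n, u (a+1) * u (a+2)
        + 2 * ∑ a ∈ range n, u (a+1) * u (a+3) := by
    simp only [Finset.sum_add_distrib, Finset.sum_sub_distrib, ← Finset.mul_sum]
  rw [hL, hD, hR]
  have hp1 : (u 1)^2 = u 1 * u 1 := by ring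
  have hpn : (u n)^2 = u n * u n := by ring
  linarith


/-- The clamped-clamped beam matrix is symmetric positive definite. -/
theorem A_CC_symm_posDef (n : ℕ) (hn : 5 ≤ n) :
    (A_CC n)ᵀ = A_CC n ∧
    ∀ x : Fin n → ℝ, x ≠ 0 → 0 < x ⬝ᵥ (A_CC n).mulVec x := by
  constructor
  · ext i j
    simp only [A_CC, transpose_apply, of_apply]
    split_ifs <;> first | rfl | omega
  · intro x hx
    rw [quad_sq n hn x]
    set u := uu n x with hu
    have hsum_nonneg : 0 ≤ ∑ m ∈ range n, (u m - 2 * u (m+1) + u (m+2))^2 :=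
      Finset.sum_nonneg fun m _ => sq_nonneg _
    have h1 := sq_nonneg (u 1)
    have h2 := sq_nonneg (u n)
    refine lt_of_le_of_ne (by linarith) ?_
    intro h
    have e1 : ∑ m ∈ range n, (u m - 2 * u (m+1) + u (m+2))^2 = 0 := by linarith
    have e2 : (u 1)^2 = 0 := by linarith
    have e3 : (u n)^2 = 0 := by linarith
    have hu1 : u 1 = 0 := sq_eq_zero_iff.mp e2
    have hun : u n = 0 := sq_eq_zero_iff.mp e3
    have hz : ∀ m, m < n → u m - 2 * u (m+1) + u (m+2) = 0 := by
      intro m hm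
      have := (Finset.sum_eq_zero_iff_of_nonneg (fun m _ => sq_nonneg
        (u m - 2 * u (m+1) + u (m+2)))).mp e1 m (Finset.mem_range.mpr hm)
      exact sq_eq_zero_iff.mp this
    have hu0 : u 0 = 0 := uu_zero n x 0 (by omega)
    have key : ∀ k, k ≤ n → u k = 0 := by
      intro k
      induction k using Nat.strong_induction_on with
      | _ k IH =>
        rcases k with _ | _ | m
        · intro _; exact hu0
        · intro _; exact hu1
        · intro hk
          have ih1 := IH m (by omega) (by omega)
          have ih2 := IH (m+1) (by omega) (by omega)
          have h3 := hz m (by omega)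
          linarith
    apply hx
    funext i
    have hi := key (↑i + 1) (by have := i.isLt; omega)
    rw [hu, uu_val n x ↑i i.isLt] at hi
    simpa using hi
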